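/- Let M be a compact, convex subset of a locally convex metrizable topological real vector space V, and let d* be a convex metric on V compatible with its topology. Assume the set ex(M) of extreme points of M is closed. Then for every ε > 0 there exists γ > 0 such that for every pair (μ, μ₀), where μ₀ ∈ ex(M) and μ is the barycenter of some Borel probability measure ξ on M (i.e., φ(μ) = ∫_M φ(ν) dξ(ν) for every continuous linear functional φ on V), the implication holds: d*(μ, μ₀) < γ ⟹ ξ(M \ Ball(μ₀, ε)) < ε. -/

import Mathlib

open MeasureTheory Set Pointwise Filter

lemma extreme_eq_of_mem_combo {V : Type*} [AddCommGroup V] [Module ℝ V]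
    {M : Set V} (hMconv : Convex ℝ M) {m : V} (hm : m ∈ Set.extremePoints ℝ M)
    {ι : Type*} [Fintype ι] [DecidableEq ι] {w : ι → ℝ} {c : ι → V}
    (hw : w ∈ stdSimplex ℝ ι) (hc : ∀ i, c i ∈ M)
    (heq : m = ∑ i, w i • c i) {i : ι} (hi : w i ≠ 0) : m = c i := by
  obtain ⟨hw0, hw1⟩ := hw
  have hile : w i ≤ 1 := hw1 ▸ Finset.single_le_sum (fun j _ => hw0 j) (Finset.mem_univ i)
  have hsum_erase : ∑ j ∈ Finset.univ.erase i, w j = 1 - w i := by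
    have := Finset.add_sum_erase Finset.univ w (Finset.mem_univ i)
    rw [hw1] at this; linarith
  rcases eq_or_lt_of_le hile with h1 | h1
  · -- w i = 1, all other weights are 0
    have hz : ∀ j ∈ Finset.univ.erase i, w j = 0 := by
      rw [← Finset.sum_eq_zero_iff_of_nonneg (fun j _ => hw0 j)]
      rw [hsum_erase, ← h1]; ring
    rw [heq, ← Finset.add_sum_erase Finset.univ _ (Finset.mem_univ i),
      Finset.sum_eq_zero (fun j hj => by rw [hz j hj, zero_smul]), add_zero, h1, one_smul]
  · -- w i < 1
    have hr : (0:ℝ) < 1 - w i := by linarith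
    set z : V := ∑ j ∈ Finset.univ.erase i, ((1 - w i)⁻¹ * w j) • c j with hz
    have hzM : z ∈ M := hMconv.sum_mem (fun j _ => mul_nonneg (inv_nonneg.2 hr.le) (hw0 j))
      (by rw [← Finset.mul_sum, hsum_erase, inv_mul_cancel₀ hr.ne']) (fun j _ => hc j)
    have hcomb : w i • c i + (1 - w i) • z = m := by
      rw [heq, ← Finset.add_sum_erase Finset.univ _ (Finset.mem_univ i), hz, Finset.smul_sum]
      congr 1
      refine Finset.sum_congr rfl fun j _ => ?_
      rw [smul_smul, ← mul_assoc, mul_inv_cancel₀ hr.ne', one_mul]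
    have hopen : m ∈ openSegment ℝ (c i) z :=
      ⟨w i, 1 - w i, lt_of_le_of_ne (hw0 i) (Ne.symm hi), hr, by ring, hcomb⟩
    exact (hm.2 (hc i) hzM hopen).symm

lemma not_mem_closure_convexHull_diff_ball
    {V : Type*} [AddCommGroup V] [Module ℝ V] [MetricSpace V]
    [IsTopologicalAddGroup V] [ContinuousSMul ℝ V]
    (hball : ∀ (p : V) (ρ : ℝ), Convex ℝ (Metric.closedBall p ρ))
    {M : Set V} (hMcomp : IsCompact M) (hMconv : Convex ℝ M)
    {m : V} (hm : m ∈ Set.extremePoints ℝ M) {r : ℝ} (hr : 0 < r) :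
    m ∉ closure (convexHull ℝ (M \ Metric.ball m r)) := by
  classical
  intro hmem
  set s₀ : Set V := M \ Metric.ball m r with hs₀
  have hs₀M : s₀ ⊆ M := diff_subset
  have hs₀comp : IsCompact s₀ := by
    rw [hs₀, diff_eq]
    exact hMcomp.inter_right Metric.isOpen_ball.isClosed_compl
  have hcover : s₀ ⊆ ⋃ p ∈ s₀, Metric.ball p (r/4) :=
    fun p hp => mem_biUnion hp (Metric.mem_ball_self (by positivity))
  obtain ⟨F, hFs₀, hFfin, hFcover⟩ :=
    hs₀comp.elim_finite_subcover_image (fun p _ => Metric.isOpen_ball) hcover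
  haveI : Fintype F := hFfin.fintype
  set C : F → Set V := fun p => M ∩ Metric.closedBall p (r/4) with hC
  have hCconv : ∀ p, Convex ℝ (C p) := fun p => hMconv.inter (hball p (r/4))
  have hCcomp : ∀ p, IsCompact (C p) := fun p => hMcomp.inter_right Metric.isClosed_closedBall
  have hCM : ∀ p, C p ⊆ M := fun p => inter_subset_left
  have hCne : ∀ p : F, (p : V) ∈ C p :=
    fun p => ⟨hs₀M (hFs₀ p.2), Metric.mem_closedBall_self (by positivity)⟩
  have hmC : ∀ p : F, m ∉ C p := by
    rintro p ⟨hpM, hpb⟩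
    have h1 : (p : V) ∈ s₀ := hFs₀ p.2
    have h2 : ¬ dist (p : V) m < r := fun h => h1.2 (Metric.mem_ball.mpr h)
    have h3 : dist m (p : V) ≤ r / 4 := Metric.mem_closedBall.mp hpb
    rw [dist_comm] at h3
    linarith [not_lt.mp h2]
  set Φ : (F → ℝ) × (F → V) → V := fun q => ∑ i, q.1 i • q.2 i with hΦdef
  set D : Set V := Φ '' ((stdSimplex ℝ F) ×ˢ Set.univ.pi fun i => C i) with hD
  have hΦcont : Continuous Φ :=
    continuous_finset_sum _ fun i _ =>
      ((continuous_apply i).comp continuous_fst).smul ((continuous_apply i).comp continuous_snd)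
  have hDcomp : IsCompact D :=
    (((isCompact_stdSimplex (𝕜 := ℝ) (ι := F)).prod (isCompact_univ_pi hCcomp)).image hΦcont)
  have hDconv : Convex ℝ D := by
    rintro x ⟨⟨w, c⟩, ⟨hw, hc⟩, rfl⟩ y ⟨⟨w', c'⟩, ⟨hw', hc'⟩, rfl⟩ a b ha hb hab
    simp only [Set.mem_prod, Set.mem_pi, Set.mem_univ, true_implies] at hc hc' ⊢
    set w'' : F → ℝ := fun i => a * w i + b * w' i with hw''
    set c'' : F → V := fun i =>
      if h : w'' i = 0 then c i else (w'' i)⁻¹ • ((a * w i) • c i + (b * w' i) • c' i) with hc''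
    have hnn : ∀ i, 0 ≤ w'' i := fun i =>
      add_nonneg (mul_nonneg ha (hw.1 i)) (mul_nonneg hb (hw'.1 i))
    refine ⟨⟨w'', c''⟩, ⟨⟨hnn, ?_⟩, fun i _ => ?_⟩, ?_⟩
    · rw [hw'']
      simp only [Finset.sum_add_distrib, ← Finset.mul_sum, hw.2, hw'.2]
      linarith
    · by_cases h : w'' i = 0
      · rw [hc'']; simp only [dif_pos h]; exact hc i
      · have h0 : 0 < w'' i := lt_of_le_of_ne (hnn i) (Ne.symm h)
        rw [hc'']; simp only [dif_neg h]
        rw [smul_add, smul_smul, smul_smul]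
        exact hCconv i (hc i) (hc' i)
          (mul_nonneg (inv_nonneg.2 h0.le) (mul_nonneg ha (hw.1 i)))
          (mul_nonneg (inv_nonneg.2 h0.le) (mul_nonneg hb (hw'.1 i)))
          (by rw [← mul_add]; field_simp; rfl)
    · have key : ∀ i : F, w'' i • c'' i = (a * w i) • c i + (b * w' i) • c' i := by
        intro i
        by_cases h : w'' i = 0
        · have h' : a * w i + b * w' i = 0 := h
          have hz1 : a * w i = 0 := by
            nlinarith [mul_nonneg ha (hw.1 i), mul_nonneg hb (hw'.1 i)]
          have hz2 : b * w' i = 0 := by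
            nlinarith [mul_nonneg ha (hw.1 i), mul_nonneg hb (hw'.1 i)]
          rw [h, zero_smul, hz1, hz2, zero_smul, zero_smul, add_zero]
        · rw [hc'']; simp only [dif_neg h]; rw [smul_inv_smul₀ h]
      show Φ ⟨w'', c''⟩ = a • Φ (w, c) + b • Φ (w', c')
      rw [hΦdef]
      simp only [Finset.smul_sum, smul_smul]
      rw [← Finset.sum_add_distrib]
      exact Finset.sum_congr rfl fun i _ => key i
  have hs₀D : s₀ ⊆ D := by
    intro q hq
    obtain ⟨p, hpF, hpq⟩ := mem_iUnion₂.mp (hFcover hq)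
    set i : F := ⟨p, hpF⟩ with hi
    have hqC : q ∈ C i := ⟨hs₀M hq, Metric.mem_closedBall.mpr (le_of_lt (Metric.mem_ball.mp hpq))⟩
    refine ⟨⟨fun j => if j = i then 1 else 0, fun j => if j = i then q else (j : V)⟩,
      ⟨⟨fun j => by dsimp only; split <;> norm_num, by simp⟩, fun j _ => ?_⟩, ?_⟩
    · dsimp only
      split
      · next h => rw [h]; exact hqC
      · exact hCne j
    · show (∑ j, _) = q
      rw [Finset.sum_eq_single i]
      · simp
      · intro j _ hj; simp [hj]
      · intro h; exact absurd (Finset.mem_univ i) h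
  have hsub : closure (convexHull ℝ s₀) ⊆ D :=
    closure_minimal (convexHull_min hs₀D hDconv) hDcomp.isClosed
  obtain ⟨⟨w, c⟩, ⟨hw, hc⟩, hΦeq⟩ := hsub hmem
  simp only [Set.mem_prod, Set.mem_pi, Set.mem_univ, true_implies] at hc
  have hex : ∃ i, w i ≠ 0 := by
    by_contra h
    push_neg at h
    have := hw.2
    rw [Finset.sum_eq_zero (fun i _ => h i)] at this
    norm_num at this
  obtain ⟨i, hi⟩ := hex
  have := extreme_eq_of_mem_combo hMconv hm hw (fun i => hCM i (hc i)) hΦeq.symm hi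
  exact hmC i (this ▸ hc i)

theorem barycenter_mass_near_extreme_point_uniform_of_closed_extremePoints
    {V : Type*} [AddCommGroup V] [Module ℝ V] [TopologicalSpace V]
    [IsTopologicalAddGroup V] [ContinuousSMul ℝ V] [LocallyConvexSpace ℝ V]
    [MeasurableSpace V] [BorelSpace V]
    (d : V → V → ℝ)
    (hd_eq : ∀ a b : V, d a b = 0 ↔ a = b)
    (hd_symm : ∀ a b : V, d a b = d b a)
    (hd_tri : ∀ a b c : V, d a c ≤ d a b + d b c)
    (hd_top : ∀ (x : V) (s : Set V), s ∈ nhds x ↔ ∃ ε > 0, {y : V | d x y < ε} ⊆ s)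
    (hd_convex : ∀ (a a' b b' : V) (t : ℝ), 0 ≤ t → t ≤ 1 →
      d (t • a + (1 - t) • b) (t • a' + (1 - t) • b') ≤ t * d a a' + (1 - t) * d b b')
    (M : Set V) (hMcomp : IsCompact M) (hMconv : Convex ℝ M)
    (hext_closed : IsClosed (Set.extremePoints ℝ M))
    (ε : ℝ) (hε : 0 < ε) :
    ∃ γ > 0, ∀ μ₀ ∈ Set.extremePoints ℝ M, ∀ (ξ : Measure V) (μ : V),
      IsProbabilityMeasure ξ → ξ M = 1 →
      (∀ φ : V →L[ℝ] ℝ, φ μ = ∫ ν, φ ν ∂ξ) →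
      d μ μ₀ < γ → (ξ (M \ {ν : V | d ν μ₀ < ε})).toReal < ε := by
  classical
  letI mS : MetricSpace V := MetricSpace.ofDistTopology d (fun x => (hd_eq x x).2 rfl) hd_symm hd_tri
    (fun s => by
      rw [isOpen_iff_mem_nhds]
      exact forall₂_congr fun x _ => (hd_top x s).trans (by
        constructor
        · rintro ⟨e, he, h⟩; exact ⟨e, he, fun y hy => h hy⟩
        · rintro ⟨e, he, h⟩; exact ⟨e, he, fun y hy => h y hy⟩))
    (fun x y h => (hd_eq x y).1 h)
  have hdist : ∀ a b : V, dist a b = d a b := fun a b => rfl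
  have hMclosed : IsClosed M := hMcomp.isClosed
  have hMmeas : MeasurableSet M := hMclosed.measurableSet
  have hball : ∀ (p : V) (ρ : ℝ), Convex ℝ (Metric.closedBall p ρ) := by
    intro p ρ x hx y hy a b ha hb hab
    have hb' : b = 1 - a := by linarith
    subst hb'
    have h := hd_convex x p y p a ha (by linarith)
    have hpp : a • p + (1 - a) • p = p := Convex.combo_self (by linarith) p
    rw [hpp] at h
    have hx' : d x p ≤ ρ := hx
    have hy' : d y p ≤ ρ := hy
    show d (a • x + (1 - a) • y) p ≤ ρ
    calc d (a • x + (1 - a) • y) p ≤ a * d x p + (1 - a) * d y p := h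
      _ ≤ a * ρ + (1 - a) * ρ := by
          apply add_le_add (mul_le_mul_of_nonneg_left hx' ha)
            (mul_le_mul_of_nonneg_left hy' (by linarith))
      _ = ρ := by ring
  by_contra hcon
  push_neg at hcon
  have H : ∀ n : ℕ, ∃ m ∈ Set.extremePoints ℝ M, ∃ (ξ : Measure V) (μ : V),
      IsProbabilityMeasure ξ ∧ ξ M = 1 ∧ (∀ φ : V →L[ℝ] ℝ, φ μ = ∫ ν, φ ν ∂ξ) ∧
      d μ m < 1/(n+1) ∧ ε ≤ (ξ (M \ {ν : V | d ν m < ε})).toReal := by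
    intro n
    obtain ⟨m, hm, ξ, μ, h⟩ := hcon (1/(n+1)) (by positivity)
    exact ⟨m, hm, ξ, μ, h⟩
  choose m hm ξ μ hprob hξM hbary hclose hmass using H
  haveI : ∀ n, IsProbabilityMeasure (ξ n) := hprob
  set K : ℕ → Set V := fun n => M \ Metric.ball (m n) ε with hKdef
  have hKball : ∀ n, K n = M \ {ν : V | d ν (m n) < ε} := fun n => rfl
  set t : ℕ → ℝ := fun n => (ξ n (K n)).toReal with htdef
  have htε : ∀ n, ε ≤ t n := fun n => hmass n
  have ht1 : ∀ n, t n ≤ 1 := by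
    intro n
    have h1 : ξ n (K n) ≤ 1 := (measure_mono (subset_univ _)).trans_eq measure_univ
    simpa using ENNReal.toReal_mono ENNReal.one_ne_top h1
  have hKM : ∀ n, K n ⊆ M := fun n => diff_subset
  have hKcomp : ∀ n, IsCompact (K n) := by
    intro n
    rw [hKdef]; simp only [diff_eq]
    exact hMcomp.inter_right Metric.isOpen_ball.isClosed_compl
  have hKmeas : ∀ n, MeasurableSet (K n) := fun n => (hKcomp n).isClosed.measurableSet
  -- Step A: the barycenter lies in t • conv̄(K) + (1-t) • M
  have hA : ∀ n, ∃ x ∈ closure (convexHull ℝ (K n)), ∃ y ∈ M,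
      μ n = t n • x + (1 - t n) • y := by
    intro n
    have hKne : (K n).Nonempty := by
      rcases eq_empty_or_nonempty (K n) with h | h
      · exfalso
        have := htε n
        rw [htdef] at this
        simp only [h, measure_empty, ENNReal.toReal_zero] at this
        linarith
      · exact h
    set CK : Set V := closure (convexHull ℝ (K n)) with hCK
    have hCKsub : CK ⊆ M := closure_minimal (convexHull_min (hKM n) hMconv) hMclosed
    have hCKcomp : IsCompact CK := hMcomp.of_isClosed_subset isClosed_closure hCKsub
    have hCKconv : Convex ℝ CK := (convex_convexHull ℝ (K n)).closure
    have hCKne : CK.Nonempty := hKne.mono ((subset_convexHull ℝ (K n)).trans subset_closure)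
    have hMne : M.Nonempty := hKne.mono (hKM n)
    have ht0 : (0:ℝ) ≤ t n := ENNReal.toReal_nonneg
    set C : Set V := t n • CK + (1 - t n) • M with hCdef
    have hCcomp : IsCompact C := (hCKcomp.smul (t n)).add (hMcomp.smul (1 - t n))
    have hCconv : Convex ℝ C := (hCKconv.smul (t n)).add (hMconv.smul (1 - t n))
    have hμC : μ n ∈ C := by
      by_contra hout
      obtain ⟨f, u, hfμ, hfC⟩ := geometric_hahn_banach_point_closed hCconv hCcomp.isClosed hout
      obtain ⟨x₀, hx₀CK, hx₀min⟩ := hCKcomp.exists_isMinOn hCKne f.continuous.continuousOn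
      obtain ⟨y₀, hy₀M, hy₀min⟩ := hMcomp.exists_isMinOn hMne f.continuous.continuousOn
      have hz₀ : t n • x₀ + (1 - t n) • y₀ ∈ C :=
        Set.add_mem_add (Set.smul_mem_smul_set hx₀CK) (Set.smul_mem_smul_set hy₀M)
      have hu : u < f (t n • x₀ + (1 - t n) • y₀) := hfC _ hz₀
      have hfz : f (t n • x₀ + (1 - t n) • y₀) = t n * f x₀ + (1 - t n) * f y₀ := by
        rw [map_add, f.map_smul, f.map_smul]; rfl
      -- integrability
      have hξMc : (ξ n) Mᶜ = 0 := by
        have h := measure_compl hMmeas (measure_ne_top (ξ n) M)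
        rw [measure_univ, hξM n] at h
        simpa using h
      have haeM : ∀ᵐ ν ∂(ξ n), ν ∈ M := by
        rw [ae_iff]
        exact hξMc
      obtain ⟨B, hB⟩ := hMcomp.exists_bound_of_continuousOn (f.continuous.continuousOn (s := M))
      have hint : Integrable (fun ν => f ν) (ξ n) :=
        ⟨f.continuous.aestronglyMeasurable,
          HasFiniteIntegral.of_bounded (haeM.mono fun ν hν => hB ν hν)⟩
      have hsplit : f (μ n) = (∫ ν in K n, f ν ∂(ξ n)) + ∫ ν in (K n)ᶜ, f ν ∂(ξ n) := by
        rw [hbary n f, ← integral_add_compl (hKmeas n) hint]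
      have hcompl_eq : (∫ ν in (K n)ᶜ, f ν ∂(ξ n)) = ∫ ν in M \ K n, f ν ∂(ξ n) := by
        apply setIntegral_congr_set
        rw [ae_eq_set]
        constructor
        · apply measure_mono_null _ hξMc
          rintro ν ⟨h1, h2⟩
          exact fun hνM => h2 ⟨hνM, h1⟩
        · have hemp : (M \ K n) \ (K n)ᶜ = ∅ := by
            ext ν
            simp only [mem_diff, mem_compl_iff, not_not, mem_empty_iff_false, iff_false, not_and]
            tauto
          rw [hemp]
          exact measure_empty
      have hMKmeas : MeasurableSet (M \ K n) := hMmeas.diff (hKmeas n)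
      have hmeasMK : (ξ n (M \ K n)).toReal = 1 - t n := by
        have hd : ξ n (M \ K n) = ξ n M - ξ n (K n) :=
          measure_diff (hKM n) (hKmeas n).nullMeasurableSet (measure_ne_top _ _)
        rw [hd, hξM n]
        rw [ENNReal.toReal_sub_of_le ((measure_mono (hKM n)).trans_eq (hξM n)) ENNReal.one_ne_top]
        simp [htdef]
      have hK_lb : f x₀ * t n ≤ ∫ ν in K n, f ν ∂(ξ n) := by
        have := setIntegral_ge_of_const_le (hKmeas n) (measure_ne_top _ _)
          (fun ν hν => isMinOn_iff.mp hx₀min ν (subset_closure (subset_convexHull ℝ _ hν)))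
          hint.integrableOn
        have e : (ξ n).real (K n) = t n := rfl
        rw [e, smul_eq_mul] at this; linarith
      have hMK_lb : f y₀ * (1 - t n) ≤ ∫ ν in M \ K n, f ν ∂(ξ n) := by
        have := setIntegral_ge_of_const_le hMKmeas (measure_ne_top _ _)
          (fun ν hν => isMinOn_iff.mp hy₀min ν hν.1)
          hint.integrableOn
        have e : (ξ n).real (M \ K n) = 1 - t n := hmeasMK
        rw [e, smul_eq_mul] at this; linarith
      rw [hcompl_eq] at hsplit
      have : f (μ n) < f (μ n) := by
        calc f (μ n) < u := hfμ
          _ < t n * f x₀ + (1 - t n) * f y₀ := hfz ▸ hu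
          _ ≤ (∫ ν in K n, f ν ∂(ξ n)) + ∫ ν in M \ K n, f ν ∂(ξ n) := by
              have h1 := hK_lb; have h2 := hMK_lb; linarith
          _ = f (μ n) := hsplit.symm
      exact absurd this (lt_irrefl _)
    -- extract the decomposition
    obtain ⟨p, hp, q, hq, hpq⟩ := Set.mem_add.mp hμC
    obtain ⟨x, hxCK, hxp⟩ := hp
    obtain ⟨y, hyM, hyq⟩ := hq
    exact ⟨x, hxCK, y, hyM, by rw [← hpq, ← hxp, ← hyq]⟩
  -- Step B: compactness and limits
  choose x hx y hy hxy using hA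
  have hexM : IsCompact (Set.extremePoints ℝ M) :=
    hMcomp.of_isClosed_subset hext_closed extremePoints_subset
  have hxM : ∀ n, x n ∈ M := fun n =>
    closure_minimal (convexHull_min (hKM n) hMconv) hMclosed (hx n)
  set P : ℕ → ℝ × V × V × V := fun n => (t n, x n, y n, m n) with hPdef
  have hPmem : ∀ n, P n ∈ (Icc ε 1) ×ˢ (M ×ˢ (M ×ˢ Set.extremePoints ℝ M)) :=
    fun n => ⟨⟨htε n, ht1 n⟩, hxM n, hy n, hm n⟩
  have hPcomp : IsCompact ((Icc ε 1) ×ˢ (M ×ˢ (M ×ˢ Set.extremePoints ℝ M))) :=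
    (isCompact_Icc).prod (hMcomp.prod (hMcomp.prod hexM))
  obtain ⟨⟨ts, xs, ys, ms⟩, hlim_mem, φ, hφmono, hφtend⟩ := hPcomp.tendsto_subseq hPmem
  obtain ⟨⟨htsε, hts1⟩, hxsM, hysM, hmsext⟩ := hlim_mem
  dsimp only at htsε hts1 hxsM hysM hmsext
  have h1 : Tendsto (fun k => t (φ k)) atTop (nhds ts) :=
    (continuous_fst.tendsto _).comp hφtend
  have h2 : Tendsto (fun k => x (φ k)) atTop (nhds xs) :=
    ((continuous_fst.comp continuous_snd).tendsto _).comp hφtend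
  have h3 : Tendsto (fun k => y (φ k)) atTop (nhds ys) :=
    ((continuous_fst.comp (continuous_snd.comp continuous_snd)).tendsto _).comp hφtend
  have h4 : Tendsto (fun k => m (φ k)) atTop (nhds ms) :=
    ((continuous_snd.comp (continuous_snd.comp continuous_snd)).tendsto _).comp hφtend
  have hz : Tendsto (fun k => t (φ k) • x (φ k) + (1 - t (φ k)) • y (φ k)) atTop
      (nhds (ts • xs + (1 - ts) • ys)) :=
    (h1.smul h2).add ((tendsto_const_nhds.sub h1).smul h3)
  have hμtend : Tendsto (fun k => μ (φ k)) atTop (nhds (ts • xs + (1 - ts) • ys)) :=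
    hz.congr (fun k => (hxy (φ k)).symm)
  have hdm : Tendsto (fun k => dist (μ (φ k)) (m (φ k))) atTop
      (nhds (dist (ts • xs + (1 - ts) • ys) ms)) := hμtend.dist h4
  have hd0 : Tendsto (fun k => dist (μ (φ k)) (m (φ k))) atTop (nhds 0) := by
    apply squeeze_zero (fun k => dist_nonneg) (g := fun k : ℕ => 1 / ((k : ℝ) + 1))
    · intro k
      have hk : d (μ (φ k)) (m (φ k)) < 1 / ((φ k : ℝ) + 1) := hclose (φ k)
      have hle : 1 / ((φ k : ℝ) + 1) ≤ 1 / ((k : ℝ) + 1) := by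
        apply one_div_le_one_div_of_le (by positivity)
        have hk' : (k : ℝ) ≤ (φ k : ℝ) := Nat.cast_le.mpr hφmono.le_apply
        linarith
      rw [hdist]
      exact le_of_lt (lt_of_lt_of_le hk hle)
    · exact tendsto_one_div_add_atTop_nhds_zero_nat
  have hzm : ts • xs + (1 - ts) • ys = ms :=
    dist_eq_zero.mp (tendsto_nhds_unique hdm hd0)
  have hts0 : 0 < ts := lt_of_lt_of_le hε htsε
  have hxm : xs = ms := by
    rcases eq_or_lt_of_le hts1 with heq | hlt
    · rw [← hzm, heq]; simp
    · exact (hmsext.2 hxsM hysM ⟨ts, 1 - ts, hts0, by linarith, by ring, hzm⟩)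
  -- Milman contradiction
  have hfinal := not_mem_closure_convexHull_diff_ball hball hMcomp hMconv hmsext
    (show (0:ℝ) < ε / 2 by linarith)
  apply hfinal
  set S : Set V := closure (convexHull ℝ (M \ Metric.ball ms (ε / 2))) with hSdef
  have hev : ∀ᶠ k in atTop, dist (m (φ k)) ms < ε / 2 :=
    Metric.tendsto_nhds.mp h4 (ε / 2) (by linarith)
  have hevS : ∀ᶠ k in atTop, x (φ k) ∈ S := by
    filter_upwards [hev] with k hk
    have hsub : K (φ k) ⊆ M \ Metric.ball ms (ε / 2) := by
      rintro ν ⟨hνM, hνball⟩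
      refine ⟨hνM, fun hb => hνball ?_⟩
      have hb' : dist ν ms < ε / 2 := hb
      have : dist ν (m (φ k)) < ε := by
        calc dist ν (m (φ k)) ≤ dist ν ms + dist ms (m (φ k)) := dist_triangle _ _ _
          _ < ε / 2 + ε / 2 := by rw [dist_comm ms]; exact add_lt_add hb' hk
          _ = ε := by ring
      exact this
    exact closure_mono (convexHull_mono hsub) (hx (φ k))
  have hxsS : xs ∈ S := isClosed_closure.mem_of_tendsto h2 hevS
  rwa [hxm] at hxsS
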